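/- Let r ≥ 1 be an integer and let P(t) = Σ_d p_d t^d be a polynomial with coefficients p_d ∈ ℚ[ℤ^r]. Then the element P(t₁ + ⋯ + t_r) of the polynomial ring ℚ[ℤ^r][t₁,…,t_r] lies in the sum Σ_{ρ=1}^{r} (1−τ_ρ)·ℚ[ℤ^r][t₁,…,t̂_ρ,…,t_r] (where ℚ[ℤ^r][t₁,…,t̂_ρ,…,t_r] denotes the subring of polynomials not involving the variable t_ρ) if and only if p_d ∈ J_d for every 0 ≤ d ≤ r−1 and p_d = 0 for every d ≥ r. -/

import Mathlib

/-- `τ_ρ`, the group-algebra element of the `ρ`-th standard basis vector of `ℤ^r`,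
in `ℚ[ℤ^r]`. -/
noncomputable def tauGen (r : ℕ) (ρ : Fin r) : AddMonoidAlgebra ℚ (Fin r → ℤ) :=
  AddMonoidAlgebra.single (Pi.single ρ (1 : ℤ)) (1 : ℚ)

/-- The ideal `J_d = ⋂_{R ⊆ {1,…,r}, |R| = r-d} I_R` of `ℚ[ℤ^r]`, where `I_R` is the
ideal generated by `{1 - τ_ρ : ρ ∈ R}`. -/
noncomputable def Jd (r d : ℕ) : Ideal (AddMonoidAlgebra ℚ (Fin r → ℤ)) :=
  ⨅ (R : Finset (Fin r)) (_ : R.card = r - d),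
    Ideal.span ((fun ρ => 1 - tauGen r ρ) '' ↑R)

section Aux

open MvPolynomial Finset

lemma coeff_sum_X_pow_aux {R : Type*} [CommSemiring R] {r : ℕ} (m : Fin r →₀ ℕ) (n : ℕ) :
    MvPolynomial.coeff m ((∑ ρ : Fin r, MvPolynomial.X ρ : MvPolynomial (Fin r) R) ^ n) =
      if (∑ ρ, m ρ) = n then (Nat.multinomial Finset.univ m : R) else 0 := by
  rw [Finset.sum_pow_eq_sum_piAntidiag, MvPolynomial.coeff_sum]
  have key : ∀ k : Fin r → ℕ,
      (∏ i : Fin r, (MvPolynomial.X i : MvPolynomial (Fin r) R) ^ k i)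
        = MvPolynomial.monomial (Finsupp.equivFunOnFinite.symm k) 1 := by
    intro k
    rw [← MvPolynomial.prod_X_pow_eq_monomial]
    refine (Finset.prod_subset (Finset.subset_univ _) ?_).symm
    intro x _ hx
    have h0 : (Finsupp.equivFunOnFinite.symm k) x = 0 := Finsupp.notMem_support_iff.mp hx
    simp only [Finsupp.coe_equivFunOnFinite_symm] at h0 ⊢
    rw [h0, pow_zero]
  simp_rw [key]
  have : ∀ k : Fin r → ℕ, MvPolynomial.coeff m
      ((Nat.multinomial Finset.univ k : MvPolynomial (Fin r) R) *
        MvPolynomial.monomial (Finsupp.equivFunOnFinite.symm k) 1) =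
      if k = ⇑m then (Nat.multinomial Finset.univ k : R) else 0 := by
    intro k
    rw [← map_natCast (MvPolynomial.C : R →+* MvPolynomial (Fin r) R),
      MvPolynomial.coeff_C_mul, MvPolynomial.coeff_monomial]
    have hcond : (Finsupp.equivFunOnFinite.symm k = m) ↔ (k = ⇑m) := by
      rw [Equiv.symm_apply_eq]; exact Iff.rfl
    simp only [hcond, mul_ite, mul_one, mul_zero]
  simp_rw [this]
  rw [Finset.sum_ite_eq' (Finset.piAntidiag Finset.univ n) (⇑m)
    (fun k => (Nat.multinomial Finset.univ k : R))]
  simp only [Finset.mem_piAntidiag]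
  by_cases h : (∑ ρ, m ρ) = n
  · rw [if_pos ⟨h, fun _ _ => Finset.mem_univ _⟩, if_pos h]
  · rw [if_neg (by simp [h]), if_neg h]

lemma coeff_aeval_aux {R : Type*} [CommRing R] {r : ℕ} (P : Polynomial R) (m : Fin r →₀ ℕ) :
    MvPolynomial.coeff m
        (Polynomial.aeval (∑ ρ : Fin r, MvPolynomial.X ρ : MvPolynomial (Fin r) R) P)
      = (Nat.multinomial Finset.univ m : R) * P.coeff (∑ ρ, m ρ) := by
  rw [Polynomial.aeval_eq_sum_range, MvPolynomial.coeff_sum]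
  simp_rw [MvPolynomial.coeff_smul, coeff_sum_X_pow_aux, smul_ite, smul_zero, smul_eq_mul]
  rw [Finset.sum_ite_eq (Finset.range (P.natDegree + 1)) (∑ ρ, m ρ)
    (fun i => P.coeff i * (Nat.multinomial Finset.univ m : R))]
  by_cases h : (∑ ρ, m ρ) ∈ Finset.range (P.natDegree + 1)
  · rw [if_pos h, mul_comm]
  · rw [if_neg h, Polynomial.coeff_eq_zero_of_natDegree_lt (by
      simp only [Finset.mem_range] at h; omega), mul_zero]

/-- The sum `Σ_ρ (1-τ_ρ)·ℚ[ℤ^r][t₁,…,t̂_ρ,…,t_r]` as a submodule. -/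
noncomputable def Tsub (r : ℕ) :
    Submodule (AddMonoidAlgebra ℚ (Fin r → ℤ))
      (MvPolynomial (Fin r) (AddMonoidAlgebra ℚ (Fin r → ℤ))) where
  carrier := {f | ∃ q : Fin r → MvPolynomial (Fin r) (AddMonoidAlgebra ℚ (Fin r → ℤ)),
      (∀ ρ : Fin r, ∀ m ∈ (q ρ).support, m ρ = 0) ∧
      f = ∑ ρ : Fin r, MvPolynomial.C (1 - tauGen r ρ) * q ρ}
  zero_mem' := ⟨0, by simp, by simp⟩
  add_mem' := by
    rintro a b ⟨qa, ha, rfl⟩ ⟨qb, hb, rfl⟩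
    refine ⟨qa + qb, fun ρ m hm => ?_, ?_⟩
    · rcases Finset.mem_union.mp (MvPolynomial.support_add hm) with h | h
      · exact ha ρ m h
      · exact hb ρ m h
    · simp_rw [Pi.add_apply, mul_add]
      rw [Finset.sum_add_distrib]
  smul_mem' := by
    rintro c x ⟨q, hq, rfl⟩
    refine ⟨c • q, fun ρ m hm => ?_, ?_⟩
    · exact hq ρ m (MvPolynomial.support_smul hm)
    · rw [Finset.smul_sum]
      simp_rw [Pi.smul_apply, mul_smul_comm]

lemma mem_Tsub {r : ℕ} (ρ : Fin r)
    (q : MvPolynomial (Fin r) (AddMonoidAlgebra ℚ (Fin r → ℤ)))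
    (hq : ∀ m ∈ q.support, m ρ = 0) :
    MvPolynomial.C (1 - tauGen r ρ) * q ∈ Tsub r := by
  refine ⟨Pi.single ρ q, fun ρ' m hm => ?_, ?_⟩
  · by_cases h : ρ' = ρ
    · subst h; rw [Pi.single_eq_same] at hm; exact hq m hm
    · rw [Pi.single_eq_of_ne h] at hm; simp at hm
  · rw [Finset.sum_eq_single ρ (fun b _ hb => by rw [Pi.single_eq_of_ne hb, mul_zero])
      (fun h => absurd (Finset.mem_univ ρ) h), Pi.single_eq_same]

/-- Cancel a nonzero natural scalar in the `ℚ`-algebra `ℚ[ℤ^r]`. -/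
lemma nat_cancel_mem {r : ℕ} {c : ℕ} (hc : c ≠ 0)
    {x : AddMonoidAlgebra ℚ (Fin r → ℤ)} {I : Ideal (AddMonoidAlgebra ℚ (Fin r → ℤ))}
    (h : (c : AddMonoidAlgebra ℚ (Fin r → ℤ)) * x ∈ I) : x ∈ I := by
  have hx : x = algebraMap ℚ _ ((c : ℚ)⁻¹) * ((c : AddMonoidAlgebra ℚ (Fin r → ℤ)) * x) := by
    rw [← map_natCast (algebraMap ℚ (AddMonoidAlgebra ℚ (Fin r → ℤ))) c, ← mul_assoc,
      ← map_mul, inv_mul_cancel₀ (by exact_mod_cast hc), map_one, one_mul]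
  rw [hx]
  exact Ideal.mul_mem_left _ _ h

lemma nat_cancel_zero {r : ℕ} {c : ℕ} (hc : c ≠ 0)
    {x : AddMonoidAlgebra ℚ (Fin r → ℤ)}
    (h : (c : AddMonoidAlgebra ℚ (Fin r → ℤ)) * x = 0) : x = 0 := by
  have := nat_cancel_mem (I := ⊥) hc (by rw [h]; exact Ideal.zero_mem ⊥)
  simpa using this

end Aux

open MvPolynomial Finset in
/-- `P(t₁ + ⋯ + t_r)` lies in `Σ_ρ (1-τ_ρ)·ℚ[ℤ^r][t₁,…,t̂_ρ,…,t_r]` if and only if the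
coefficient `p_d` of `P` lies in `J_d` for all `d < r` and vanishes for all `d ≥ r`. -/
theorem mem_sum_iff_coeff_mem_Jd (r : ℕ) (hr : 1 ≤ r)
    (P : Polynomial (AddMonoidAlgebra ℚ (Fin r → ℤ))) :
    (∃ q : Fin r → MvPolynomial (Fin r) (AddMonoidAlgebra ℚ (Fin r → ℤ)),
        (∀ ρ : Fin r, ∀ m ∈ (q ρ).support, m ρ = 0) ∧
        Polynomial.aeval (∑ ρ : Fin r, MvPolynomial.X ρ) P =
          ∑ ρ : Fin r, MvPolynomial.C (1 - tauGen r ρ) * q ρ) ↔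
      ((∀ d, d < r → P.coeff d ∈ Jd r d) ∧ ∀ d, r ≤ d → P.coeff d = 0) := by
  constructor
  · rintro ⟨q, hq, heq⟩
    have coeffRHS : ∀ m : Fin r →₀ ℕ,
        MvPolynomial.coeff m (∑ ρ : Fin r, MvPolynomial.C (1 - tauGen r ρ) * q ρ)
          = ∑ ρ : Fin r, (1 - tauGen r ρ) * MvPolynomial.coeff m (q ρ) := by
      intro m
      rw [MvPolynomial.coeff_sum]
      simp_rw [MvPolynomial.coeff_C_mul]
    constructor
    · intro d hd
      rw [Jd, Ideal.mem_iInf]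
      intro R
      rw [Ideal.mem_iInf]
      intro hR
      -- the square-free monomial supported on the complement of `R`
      set m : Fin r →₀ ℕ :=
        Finsupp.equivFunOnFinite.symm (fun ρ => if ρ ∈ R then 0 else 1) with hm
      have hmval : ∀ ρ, m ρ = if ρ ∈ R then 0 else 1 := fun ρ => rfl
      have hmsum : (∑ ρ, m ρ) = d := by
        simp_rw [hmval]
        rw [Finset.sum_ite, Finset.sum_const_zero, Finset.sum_const, zero_add, smul_eq_mul,
          mul_one]
        have : Finset.filter (fun ρ => ρ ∉ R) Finset.univ = Rᶜ := by
          ext x; simp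
        rw [this, Finset.card_compl, hR]
        simp only [Fintype.card_fin]
        omega
      have hL := coeff_aeval_aux P m
      rw [heq, coeffRHS, hmsum] at hL
      have hmem : (∑ ρ : Fin r, (1 - tauGen r ρ) * MvPolynomial.coeff m (q ρ))
          ∈ Ideal.span ((fun ρ => 1 - tauGen r ρ) '' ↑R) := by
        apply Ideal.sum_mem
        intro ρ _
        by_cases hρ : ρ ∈ R
        · exact Ideal.mul_mem_right _ _ (Ideal.subset_span ⟨ρ, hρ, rfl⟩)
        · have : MvPolynomial.coeff m (q ρ) = 0 := by
            by_contra hne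
            have := hq ρ m (MvPolynomial.mem_support_iff.mpr hne)
            rw [hmval ρ, if_neg hρ] at this
            exact one_ne_zero this
          rw [this, mul_zero]
          exact Ideal.zero_mem _
      rw [hL] at hmem
      exact nat_cancel_mem (Nat.multinomial_pos Finset.univ m).ne' hmem
    · intro d hd
      set m : Fin r →₀ ℕ :=
        Finsupp.single ⟨0, hr⟩ (d - r) + Finsupp.equivFunOnFinite.symm (fun _ => 1) with hm
      have hmval : ∀ ρ, m ρ = (if (⟨0, hr⟩ : Fin r) = ρ then d - r else 0) + 1 := by
        intro ρ
        rw [hm, Finsupp.add_apply, Finsupp.single_apply]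
        rfl
      have hmne : ∀ ρ : Fin r, m ρ ≠ 0 := fun ρ => by rw [hmval]; omega
      have hmsum : (∑ ρ, m ρ) = d := by
        simp_rw [hmval]
        rw [Finset.sum_add_distrib, Finset.sum_ite_eq Finset.univ (⟨0, hr⟩ : Fin r)
          (fun _ => d - r), if_pos (Finset.mem_univ _), Finset.sum_const, Finset.card_univ]
        simp only [Fintype.card_fin, smul_eq_mul, mul_one]
        omega
      have hL := coeff_aeval_aux P m
      rw [heq, coeffRHS, hmsum] at hL
      have hzero : (∑ ρ : Fin r, (1 - tauGen r ρ) * MvPolynomial.coeff m (q ρ)) = 0 := by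
        apply Finset.sum_eq_zero
        intro ρ _
        have : MvPolynomial.coeff m (q ρ) = 0 := by
          by_contra hne
          exact hmne ρ (hq ρ m (MvPolynomial.mem_support_iff.mpr hne))
        rw [this, mul_zero]
      rw [hzero] at hL
      exact nat_cancel_zero (Nat.multinomial_pos Finset.univ m).ne' hL.symm
  · rintro ⟨h₁, h₂⟩
    suffices h : Polynomial.aeval (∑ ρ : Fin r, MvPolynomial.X ρ) P ∈ Tsub r by exact h
    rw [Polynomial.aeval_eq_sum_range]
    apply Submodule.sum_mem
    intro i _
    by_cases hir : r ≤ i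
    · rw [h₂ i hir, zero_smul]
      exact Submodule.zero_mem _
    · push_neg at hir
      rw [← MvPolynomial.support_sum_monomial_coeff
        ((∑ ρ : Fin r, MvPolynomial.X ρ : MvPolynomial (Fin r)
          (AddMonoidAlgebra ℚ (Fin r → ℤ))) ^ i), Finset.smul_sum]
      apply Submodule.sum_mem
      intro m hm
      have hcoeff : MvPolynomial.coeff m
          ((∑ ρ : Fin r, MvPolynomial.X ρ : MvPolynomial (Fin r)
            (AddMonoidAlgebra ℚ (Fin r → ℤ))) ^ i) ≠ 0 :=
        MvPolynomial.mem_support_iff.mp hm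
      have hsum : (∑ ρ, m ρ) = i := by
        by_contra h
        exact hcoeff (by rw [coeff_sum_X_pow_aux, if_neg h])
      have hcard : m.support.card ≤ i := by
        calc m.support.card = m.support.card • 1 := by simp
          _ ≤ ∑ ρ ∈ m.support, m ρ := Finset.card_nsmul_le_sum _ _ _
            (fun x hx => Nat.one_le_iff_ne_zero.mpr (Finsupp.mem_support_iff.mp hx))
          _ ≤ ∑ ρ, m ρ := Finset.sum_le_sum_of_subset (Finset.subset_univ _)
          _ = i := hsum
      obtain ⟨R, hRsub, hRcard⟩ := Finset.exists_subset_card_eq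
        (show r - i ≤ m.supportᶜ.card by
          rw [Finset.card_compl]; simp only [Fintype.card_fin]; omega)
      have hPmem : P.coeff i ∈ Ideal.span ((fun ρ => 1 - tauGen r ρ) '' ↑R) := by
        have h := h₁ i hir
        rw [Jd, Ideal.mem_iInf] at h
        have h := h R
        rw [Ideal.mem_iInf] at h
        exact h hRcard
      obtain ⟨n, f, g, hfg⟩ := Submodule.mem_span_set'.mp hPmem
      rw [← hfg, Finset.sum_smul]
      apply Submodule.sum_mem
      intro j _
      obtain ⟨x, hρ⟩ := g j
      obtain ⟨ρ, hρR, rfl⟩ := hρ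
      have hrw : (f j • (1 - tauGen r ρ)) •
          (MvPolynomial.monomial m (MvPolynomial.coeff m
            ((∑ ρ : Fin r, MvPolynomial.X ρ : MvPolynomial (Fin r)
              (AddMonoidAlgebra ℚ (Fin r → ℤ))) ^ i)))
          = MvPolynomial.C (1 - tauGen r ρ) *
            (f j • MvPolynomial.monomial m (MvPolynomial.coeff m
              ((∑ ρ : Fin r, MvPolynomial.X ρ : MvPolynomial (Fin r)
                (AddMonoidAlgebra ℚ (Fin r → ℤ))) ^ i))) := by
        rw [smul_eq_mul, MvPolynomial.smul_eq_C_mul, MvPolynomial.smul_eq_C_mul, map_mul]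
        ring
      rw [hrw]
      apply mem_Tsub
      intro m' hm'
      have hsub : m' ∈ (MvPolynomial.monomial m (MvPolynomial.coeff m
          ((∑ ρ : Fin r, MvPolynomial.X ρ : MvPolynomial (Fin r)
            (AddMonoidAlgebra ℚ (Fin r → ℤ))) ^ i))).support :=
        MvPolynomial.support_smul hm'
      have hm'm : m' = m :=
        Finset.mem_singleton.mp (MvPolynomial.support_monomial_subset hsub)
      subst hm'm
      have : ρ ∉ m'.support := Finset.mem_compl.mp (hRsub hρR)
      exact Finsupp.notMem_support_iff.mp this
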